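/- Let A₁ and A₂ be real matrices with n columns and full column rank n such that every column of A₁ has Euclidean norm 1 and every column of A₂ has Euclidean norm 1. If for every q ∈ ℝⁿ one has qᵀ(A₁ᵀA₁)⁻¹q ≤ qᵀ(A₂ᵀA₂)⁻¹q, then A₁ᵀA₁ = A₂ᵀA₂; in particular the two strategies induce identical error on every linear query. -/

import Mathlib

open Matrix BigOperators

section Helpers

variable {n p : ℕ}

private lemma herm_symm' (N : Matrix (Fin n) (Fin n) ℝ) (hN : N.IsHermitian) (x y : Fin n → ℝ) :
    x ⬝ᵥ N *ᵥ y = y ⬝ᵥ N *ᵥ x := by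
  have hT : Nᵀ = N := by rw [← conjTranspose_eq_transpose_of_trivial, hN.eq]
  rw [dotProduct_mulVec, ← hT, vecMul_transpose, dotProduct_comm, hT]

private lemma cs_psd' (N : Matrix (Fin n) (Fin n) ℝ) (hN : N.PosSemidef) (x y : Fin n → ℝ) :
    (x ⬝ᵥ N *ᵥ y) ^ 2 ≤ (x ⬝ᵥ N *ᵥ x) * (y ⬝ᵥ N *ᵥ y) := by
  have hsym := herm_symm' N hN.1 x y
  have key : ∀ t : ℝ, 0 ≤ (y ⬝ᵥ N *ᵥ y) * (t * t) + (2 * (x ⬝ᵥ N *ᵥ y)) * t + (x ⬝ᵥ N *ᵥ x) := by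
    intro t
    have h := hN.dotProduct_mulVec_nonneg (x + t • y)
    simp only [star_trivial, mulVec_add, mulVec_smul, dotProduct_add, add_dotProduct,
      smul_dotProduct, dotProduct_smul, smul_eq_mul] at h
    rw [hsym] at h ⊢
    ring_nf at h ⊢
    linarith
  have hd := discrim_le_zero key
  rw [discrim] at hd
  nlinarith [hd]

private lemma posDef_ata' (A : Matrix (Fin p) (Fin n) ℝ) (h : A.rank = n) : (Aᵀ * A).PosDef := by
  have hker : ∀ x : Fin n → ℝ, A *ᵥ x = 0 → x = 0 := by
    have h1 := A.mulVecLin.finrank_range_add_finrank_ker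
    rw [Matrix.rank] at h
    rw [h, Module.finrank_pi] at h1
    have h2 : Module.finrank ℝ (LinearMap.ker A.mulVecLin) = 0 := by simpa using h1
    rw [Submodule.finrank_eq_zero] at h2
    intro x hx
    have : x ∈ LinearMap.ker A.mulVecLin := by simpa [LinearMap.mem_ker]
    rw [h2] at this
    simpa using this
  refine .of_dotProduct_mulVec_pos ?_ (fun x hx => ?_)
  · have := isHermitian_conjTranspose_mul_self A
    rwa [conjTranspose_eq_transpose_of_trivial] at this
  · have hform : x ⬝ᵥ (Aᵀ * A) *ᵥ x = (A *ᵥ x) ⬝ᵥ (A *ᵥ x) := by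
      rw [← mulVec_mulVec, dotProduct_mulVec, vecMul_transpose]
    rw [star_trivial, hform]
    have hAx : A *ᵥ x ≠ 0 := fun hc => hx (hker x hc)
    have hz := dotProduct_self_eq_zero (v := A *ᵥ x)
    have hnn : 0 ≤ (A *ᵥ x) ⬝ᵥ (A *ᵥ x) := Finset.sum_nonneg fun i _ => mul_self_nonneg _
    rcases hnn.lt_or_eq with hlt | heq
    · exact hlt
    · exact absurd (hz.mp heq.symm) hAx

private lemma inv_antitone' {B C : Matrix (Fin n) (Fin n) ℝ} (hB : B.PosDef) (hC : C.PosDef)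
    (h : ∀ x, x ⬝ᵥ B⁻¹ *ᵥ x ≤ x ⬝ᵥ C⁻¹ *ᵥ x) :
    ∀ x, x ⬝ᵥ C *ᵥ x ≤ x ⬝ᵥ B *ᵥ x := by
  intro x
  have hBinv : (B⁻¹).PosSemidef := hB.inv.posSemidef
  have hBdet : IsUnit B.det := isUnit_iff_ne_zero.mpr hB.det_pos.ne'
  have hCdet : IsUnit C.det := isUnit_iff_ne_zero.mpr hC.det_pos.ne'
  set y := C *ᵥ x with hy
  set u := B *ᵥ x with hu
  have hCy : C⁻¹ *ᵥ y = x := by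
    rw [hy, mulVec_mulVec, nonsing_inv_mul _ hCdet, one_mulVec]
  have hBu : B⁻¹ *ᵥ u = x := by
    rw [hu, mulVec_mulVec, nonsing_inv_mul _ hBdet, one_mulVec]
  set a := x ⬝ᵥ C *ᵥ x with hadef
  set c := x ⬝ᵥ B *ᵥ x with hcdef
  have ha0 : 0 ≤ a := by simpa using hC.posSemidef.dotProduct_mulVec_nonneg x
  have hc0 : 0 ≤ c := by simpa using hB.posSemidef.dotProduct_mulVec_nonneg x
  have hb0 : 0 ≤ y ⬝ᵥ B⁻¹ *ᵥ y := by simpa using hBinv.dotProduct_mulVec_nonneg y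
  have hba : y ⬝ᵥ B⁻¹ *ᵥ y ≤ a := by
    calc y ⬝ᵥ B⁻¹ *ᵥ y ≤ y ⬝ᵥ C⁻¹ *ᵥ y := h y
    _ = y ⬝ᵥ x := by rw [hCy]
    _ = x ⬝ᵥ y := dotProduct_comm _ _
    _ = a := rfl
  have hcs := cs_psd' (B⁻¹) hBinv u y
  have h1 : u ⬝ᵥ B⁻¹ *ᵥ y = a := by
    rw [herm_symm' _ hBinv.1, hBu]
    calc y ⬝ᵥ x = x ⬝ᵥ y := dotProduct_comm _ _
    _ = a := rfl
  have h2 : u ⬝ᵥ B⁻¹ *ᵥ u = c := by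
    rw [hBu, hu, dotProduct_comm]
  rw [h1, h2] at hcs
  nlinarith [hcs, hba, hc0, ha0, hb0]

private lemma psd_trace_zero' {D : Matrix (Fin n) (Fin n) ℝ} (hD : D.PosSemidef)
    (ht : D.trace = 0) : D = 0 := by
  have hdp : ∀ (i j : Fin n), Pi.single i (1:ℝ) ⬝ᵥ D *ᵥ Pi.single j 1 = D i j := by
    intro i j; simp [dotProduct, mulVec, Pi.single_apply]
  have hdiag : ∀ i, D i i = 0 := by
    have hnn : ∀ i ∈ Finset.univ, (0:ℝ) ≤ D i i := by
      intro i _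
      have := hD.dotProduct_mulVec_nonneg (Pi.single i 1)
      rwa [star_trivial, hdp i i] at this
    intro i
    exact (Finset.sum_eq_zero_iff_of_nonneg hnn).mp ht i (Finset.mem_univ i)
  ext i j
  rcases eq_or_ne i j with rfl | hij
  · simpa using hdiag i
  · have hsym : D j i = D i j := by
      have := herm_symm' D hD.1 (Pi.single i 1) (Pi.single j 1)
      rwa [hdp i j, hdp j i, eq_comm] at this
    have h := hD.dotProduct_mulVec_nonneg ((Pi.single i 1 : Fin n → ℝ) + (-D i j) • (Pi.single j 1 : Fin n → ℝ))
    simp only [star_trivial, mulVec_add, mulVec_smul, dotProduct_add, add_dotProduct,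
      smul_dotProduct, dotProduct_smul, smul_eq_mul, hdp] at h
    rw [hsym, hdiag i, hdiag j] at h
    have : D i j = 0 := by nlinarith [h, sq_nonneg (D i j)]
    simpa using this

private lemma trace_ata' (A : Matrix (Fin p) (Fin n) ℝ)
    (hu : ∀ j, Real.sqrt (∑ i, (A i j) ^ 2) = 1) : (Aᵀ * A).trace = (n : ℝ) := by
  have hcol : ∀ j, ∑ i, (A i j) ^ 2 = 1 := by
    intro j
    have hs : 0 ≤ ∑ i, (A i j) ^ 2 := Finset.sum_nonneg fun i _ => sq_nonneg _
    calc ∑ i, (A i j) ^ 2 = Real.sqrt (∑ i, (A i j) ^ 2) ^ 2 := (Real.sq_sqrt hs).symm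
    _ = 1 ^ 2 := by rw [hu j]
    _ = 1 := one_pow 2
  have : ∀ j, (Aᵀ * A) j j = 1 := by
    intro j
    rw [mul_apply]
    simpa [transpose_apply, ← sq] using hcol j
  simp [Matrix.trace, Matrix.diag, this]

end Helpers

/-- **Column-uniform strategies dominating each other are equal.**
If `A₁` and `A₂` are full-column-rank matrices with `n` columns whose columns all have
Euclidean norm 1, and `qᵀ(A₁ᵀA₁)⁻¹q ≤ qᵀ(A₂ᵀA₂)⁻¹q` for every `q`, then
`A₁ᵀA₁ = A₂ᵀA₂`; in particular the two strategies induce identical error on every query. -/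
theorem column_uniform_dominates_eq (n p₁ p₂ : ℕ)
    (A₁ : Matrix (Fin p₁) (Fin n) ℝ) (A₂ : Matrix (Fin p₂) (Fin n) ℝ)
    (h₁ : A₁.rank = n) (h₂ : A₂.rank = n)
    (hu₁ : ∀ j, Real.sqrt (∑ i, (A₁ i j) ^ 2) = 1)
    (hu₂ : ∀ j, Real.sqrt (∑ i, (A₂ i j) ^ 2) = 1)
    (hle : ∀ q : Fin n → ℝ,
      q ⬝ᵥ ((A₁ᵀ * A₁)⁻¹).mulVec q ≤ q ⬝ᵥ ((A₂ᵀ * A₂)⁻¹).mulVec q) :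
    A₁ᵀ * A₁ = A₂ᵀ * A₂ ∧
    (∀ q : Fin n → ℝ,
      q ⬝ᵥ ((A₁ᵀ * A₁)⁻¹).mulVec q = q ⬝ᵥ ((A₂ᵀ * A₂)⁻¹).mulVec q) := by
  have hPD₁ : (A₁ᵀ * A₁).PosDef := posDef_ata' A₁ h₁
  have hPD₂ : (A₂ᵀ * A₂).PosDef := posDef_ata' A₂ h₂
  have hord := inv_antitone' hPD₁ hPD₂ hle
  have hDpsd : (A₁ᵀ * A₁ - A₂ᵀ * A₂).PosSemidef := by
    refine .of_dotProduct_mulVec_nonneg (hPD₁.1.sub hPD₂.1) (fun x => ?_)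
    rw [star_trivial, sub_mulVec, dotProduct_sub, sub_nonneg]
    exact hord x
  have hDtr : (A₁ᵀ * A₁ - A₂ᵀ * A₂).trace = 0 := by
    rw [trace_sub, trace_ata' A₁ hu₁, trace_ata' A₂ hu₂, sub_self]
  have heq : A₁ᵀ * A₁ = A₂ᵀ * A₂ := sub_eq_zero.mp (psd_trace_zero' hDpsd hDtr)
  exact ⟨heq, fun q => by rw [heq]⟩
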